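/- Consider merging k sorted arrays A[1..k] each of length n, by forming m subproblems where the p-th subproblem merges, for each i, the subsequence of A[i] consisting of elements A[i,j] with j ≡ p (mod m), and letting D[p] be the sorted output of the p-th subproblem. View D as an m × (nk/m) array with row p equal to D[p]. Then every row and every column of D is in sorted order, and every element in column j of D is less than or equal to every element in column j + k of D. -/

import Mathlib

open Finset

private lemma lb_seg {α : Type*} [LinearOrder α] {N : ℕ} (f : Fin N → α) (hf : Monotone f)
    (x : α) (j : Fin N) :
    f j ≤ x ↔ (j : ℕ) < (univ.filter (fun i => f i ≤ x)).card := by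
  constructor
  · intro h
    have hsub : Finset.Iic j ⊆ univ.filter (fun i => f i ≤ x) := by
      intro i hi
      simp only [mem_filter, mem_univ, true_and]
      exact le_trans (hf (mem_Iic.mp hi)) h
    have := Finset.card_le_card hsub
    rw [Fin.card_Iic] at this
    omega
  · intro h
    by_contra hc
    have hsub : univ.filter (fun i => f i ≤ x) ⊆ Finset.Iio j := by
      intro i hi
      simp only [mem_filter] at hi
      rw [mem_Iio]
      by_contra hij
      exact hc (le_trans (hf (le_of_not_gt hij)) hi.2)
    have := Finset.card_le_card hsub
    rw [Fin.card_Iio] at this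
    omega

private lemma lb_card_eq {N c : ℕ} (hc : c ≤ N) (p m : ℕ) :
    (univ.filter (fun j : Fin N => (j : ℕ) % m = p ∧ (j : ℕ) < c)).card
      = ((range c).filter (fun j => j % m = p)).card := by
  refine Finset.card_bij (fun j _ => (j : ℕ)) ?_ ?_ ?_
  · intro a ha
    simp only [mem_filter, mem_univ, true_and, mem_range] at ha ⊢
    exact ⟨ha.2, ha.1⟩
  · intro a _ b _ hab
    exact Fin.val_injective hab
  · intro b hb
    simp only [mem_filter, mem_range] at hb
    exact ⟨⟨b, lt_of_lt_of_le hb.1 hc⟩, by simp [hb.1, hb.2], rfl⟩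

private lemma lb_gmono (m c : ℕ) {p₁ p₂ : ℕ} (h₁ : p₁ ≤ p₂) (h₂ : p₂ < m) :
    ((range c).filter (fun j => j % m = p₂)).card
      ≤ ((range c).filter (fun j => j % m = p₁)).card := by
  apply Finset.card_le_card_of_injOn (fun j => j - (p₂ - p₁))
  · intro j hj
    simp only [Finset.mem_coe, mem_filter, mem_range] at hj ⊢
    obtain ⟨hjc, hjm⟩ := hj
    refine ⟨lt_of_le_of_lt (Nat.sub_le _ _) hjc, ?_⟩
    obtain ⟨t, rfl⟩ : ∃ t, j = m * t + p₂ :=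
      ⟨j / m, by conv_lhs => rw [← Nat.div_add_mod j m, hjm]⟩
    have he : m * t + p₂ - (p₂ - p₁) = m * t + p₁ := by
      rw [Nat.add_sub_assoc (Nat.sub_le _ _), Nat.sub_sub_self h₁]
    rw [he, Nat.mul_add_mod, Nat.mod_eq_of_lt (lt_of_le_of_lt h₁ h₂)]
  · intro a ha b hb hab
    simp only [coe_filter, Set.mem_setOf_eq, mem_range] at ha hb
    have hab' : a - (p₂ - p₁) = b - (p₂ - p₁) := hab
    have ha2 : p₂ ≤ a := ha.2 ▸ Nat.mod_le a m
    have hb2 : p₂ ≤ b := hb.2 ▸ Nat.mod_le b m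
    omega

private lemma lb_gbound (m c : ℕ) {p₁ p₂ : ℕ} (hp₁ : p₁ < m) (hp₂ : p₂ < m) :
    ((range c).filter (fun j => j % m = p₂)).card
      ≤ ((range c).filter (fun j => j % m = p₁)).card + 1 := by
  set S₂ := (range c).filter (fun j => j % m = p₂)
  have h1 : S₂.card ≤ (S₂.erase p₂).card + 1 := by
    have : S₂ ⊆ insert p₂ (S₂.erase p₂) := Finset.subset_insert_iff.mpr (le_refl _)
    exact le_trans (Finset.card_le_card this) (Finset.card_insert_le _ _)
  refine le_trans h1 (Nat.add_le_add_right ?_ 1)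
  apply Finset.card_le_card_of_injOn (fun j => j - (m + p₂ - p₁))
  · intro j hj
    simp only [S₂, Finset.mem_coe, Finset.mem_erase, mem_filter, mem_range] at hj ⊢
    obtain ⟨hne, hjc, hjm⟩ := hj
    refine ⟨lt_of_le_of_lt (Nat.sub_le _ _) hjc, ?_⟩
    obtain ⟨t, rfl⟩ : ∃ t, j = m * t + p₂ :=
      ⟨j / m, by conv_lhs => rw [← Nat.div_add_mod j m, hjm]⟩
    have ht : t ≠ 0 := by rintro rfl; simp at hne
    obtain ⟨s, rfl⟩ : ∃ s, t = s + 1 := ⟨t - 1, by omega⟩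
    have he : m * (s + 1) + p₂ - (m + p₂ - p₁) = m * s + p₁ := by
      have : m * (s + 1) + p₂ = m * s + (m + p₂) := by ring
      rw [this, Nat.add_sub_assoc (Nat.sub_le _ _),
        Nat.sub_sub_self (le_trans (le_of_lt hp₁) (Nat.le_add_right m p₂))]
    rw [he, Nat.mul_add_mod, Nat.mod_eq_of_lt hp₁]
  · intro a ha b hb hab
    simp only [S₂, coe_erase, Set.mem_diff, coe_filter, Set.mem_setOf_eq, mem_range,
      Set.mem_singleton_iff] at ha hb
    obtain ⟨⟨hac, ham⟩, hane⟩ := ha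
    obtain ⟨⟨hbc, hbm⟩, hbne⟩ := hb
    obtain ⟨t, rfl⟩ : ∃ t, a = m * t + p₂ :=
      ⟨a / m, by conv_lhs => rw [← Nat.div_add_mod a m, ham]⟩
    obtain ⟨u, rfl⟩ : ∃ u, b = m * u + p₂ :=
      ⟨b / m, by conv_lhs => rw [← Nat.div_add_mod b m, hbm]⟩
    have hab' : m * t + p₂ - (m + p₂ - p₁) = m * u + p₂ - (m + p₂ - p₁) := hab
    have ht : t ≠ 0 := by rintro rfl; simp at hane
    have hu : u ≠ 0 := by rintro rfl; simp at hbne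
    have h1 : m * 1 ≤ m * t := Nat.mul_le_mul_left m (by omega)
    have h2 : m * 1 ≤ m * u := Nat.mul_le_mul_left m (by omega)
    have hm1 : m * 1 = m := Nat.mul_one m
    have h3 : m * t = m * u := by omega
    have := Nat.eq_of_mul_eq_mul_left (by omega : 0 < m) h3
    omega

/-- Lee–Batcher modular merging: given `k` sorted arrays
`A 1, …, A k`, each of length `n = m·q`, and letting row `p` of `D` be the sorted
merge of the subsequences consisting of the entries `A[i,j]` with `j ≡ p (mod m)`
(so `D` is an `m × (k·q)` array whose row `p` equals, as a multiset, the entries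
with index `≡ p mod m`), every row and column of `D` is sorted, and every element
of column `j₁` is at most every element of column `j₂ = j₁ + k`. -/
theorem lee_batcher_modular_merge
    {α : Type*} [LinearOrder α] (k m q : ℕ) (hk : 1 ≤ k) (hm : 1 ≤ m) (hq : 1 ≤ q)
    (A : Fin k → Fin (m * q) → α) (hA : ∀ i, Monotone (A i))
    (D : Fin m → Fin (k * q) → α)
    (hDsorted : ∀ p, Monotone (D p))
    (hDmerge : ∀ p : Fin m,
      (Finset.univ.val.map fun j : Fin (k * q) => D p j) =
      ((Finset.univ.filter
          (fun ij : Fin k × Fin (m * q) => (ij.2 : ℕ) % m = (p : ℕ))).val.map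
        fun ij => A ij.1 ij.2)) :
    (∀ p, Monotone (D p)) ∧
    (∀ j : Fin (k * q), Monotone fun p => D p j) ∧
    (∀ j₁ j₂ : Fin (k * q), (j₁ : ℕ) + k = (j₂ : ℕ) →
      ∀ p₁ p₂ : Fin m, D p₁ j₁ ≤ D p₂ j₂) := by
  classical
  set Crow : Fin m → α → ℕ :=
    fun p x => (univ.filter (fun j : Fin (k * q) => D p j ≤ x)).card with hCrow
  set c : Fin k → α → ℕ :=
    fun i x => (univ.filter (fun j : Fin (m * q) => A i j ≤ x)).card with hc
  have hcle : ∀ i x, c i x ≤ m * q := fun i x => by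
    simpa using Finset.card_filter_le (univ : Finset (Fin (m * q))) _
  have key : ∀ (p : Fin m) (x : α),
      Crow p x = ∑ i : Fin k,
        ((range (c i x)).filter (fun j => j % m = (p : ℕ))).card := by
    intro p x
    have h1 : Crow p x
        = Multiset.countP (fun a => a ≤ x) (univ.val.map fun j : Fin (k * q) => D p j) := by
      rw [Multiset.countP_map]
      rfl
    rw [h1, hDmerge p, Multiset.countP_map]
    have h2 : ((univ.filter
          (fun ij : Fin k × Fin (m * q) => (ij.2 : ℕ) % m = (p : ℕ))).val.filter
            (fun ij => A ij.1 ij.2 ≤ x)).card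
        = (univ.filter (fun ij : Fin k × Fin (m * q) =>
            (ij.2 : ℕ) % m = (p : ℕ) ∧ A ij.1 ij.2 ≤ x)).card := by
      rw [show ((univ.filter
          (fun ij : Fin k × Fin (m * q) => (ij.2 : ℕ) % m = (p : ℕ))).val.filter
            (fun ij => A ij.1 ij.2 ≤ x))
          = ((univ.filter
          (fun ij : Fin k × Fin (m * q) => (ij.2 : ℕ) % m = (p : ℕ))).filter
            (fun ij => A ij.1 ij.2 ≤ x)).val from rfl]
      rw [Finset.filter_filter]
      rfl
    rw [show Multiset.card ((univ.filter
          (fun ij : Fin k × Fin (m * q) => (ij.2 : ℕ) % m = (p : ℕ))).val.filter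
            (fun ij => A ij.1 ij.2 ≤ x))
        = ((univ.filter
          (fun ij : Fin k × Fin (m * q) => (ij.2 : ℕ) % m = (p : ℕ))).val.filter
            (fun ij => A ij.1 ij.2 ≤ x)).card from rfl, h2]
    rw [Finset.card_filter]
    rw [Fintype.sum_prod_type]
    refine Finset.sum_congr rfl fun i _ => ?_
    rw [← Finset.card_filter]
    rw [← lb_card_eq (hcle i x) (p : ℕ) m]
    refine congrArg Finset.card (Finset.filter_congr fun j _ => ?_)
    exact and_congr_right fun _ => lb_seg (A i) (hA i) x j
  have horder : ∀ (p : Fin m) (x : α) (j : Fin (k * q)),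
      D p j ≤ x ↔ (j : ℕ) < Crow p x :=
    fun p x j => lb_seg (D p) (hDsorted p) x j
  have hmono' : ∀ (p₁ p₂ : Fin m), p₁ ≤ p₂ → ∀ x, Crow p₂ x ≤ Crow p₁ x := by
    intro p₁ p₂ hp x
    rw [key, key]
    exact Finset.sum_le_sum fun i _ => lb_gmono m (c i x) hp p₂.isLt
  have hbound : ∀ (p₁ p₂ : Fin m) (x : α), Crow p₂ x ≤ Crow p₁ x + k := by
    intro p₁ p₂ x
    rw [key, key]
    calc ∑ i : Fin k, ((range (c i x)).filter (fun j => j % m = (p₂ : ℕ))).card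
        ≤ ∑ i : Fin k,
          (((range (c i x)).filter (fun j => j % m = (p₁ : ℕ))).card + 1) :=
          Finset.sum_le_sum fun i _ => lb_gbound m (c i x) p₁.isLt p₂.isLt
      _ = (∑ i : Fin k,
          ((range (c i x)).filter (fun j => j % m = (p₁ : ℕ))).card) + k := by
          rw [Finset.sum_add_distrib, Finset.sum_const, Finset.card_univ,
            Fintype.card_fin, smul_eq_mul, mul_one]
  refine ⟨hDsorted, ?_, ?_⟩
  · intro j p₁ p₂ hp
    rw [horder]
    exact lt_of_lt_of_le ((horder p₂ (D p₂ j) j).mp le_rfl) (hmono' p₁ p₂ hp _)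
  · intro j₁ j₂ hj p₁ p₂
    rw [horder]
    have h1 : (j₂ : ℕ) < Crow p₂ (D p₂ j₂) := (horder p₂ (D p₂ j₂) j₂).mp le_rfl
    have h2 := hbound p₁ p₂ (D p₂ j₂)
    omega
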